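/- Let N ≥ 3. For 1 ≤ i ≤ N−2 and 1 ≤ j ≤ N−(i+1), define the real N×N matrix M_{i,i+1,i+1+j} whose (m,n) entry is 1 if (m,n) ∈ {(i, i+1), (i+1, i+1+j), (i+1+j, i)}, is −1 if (m,n) ∈ {(i+1, i), (i+1+j, i+1), (i, i+1+j)}, and is 0 otherwise. Then the family {M_{i,i+1,i+1+j} : 1 ≤ i ≤ N−2, 1 ≤ j ≤ N−(i+1)}, consisting of C(N−1,2) matrices, is a basis of the space 𝓜 of antisymmetric real N×N matrices whose rows sum to zero. -/

import Mathlib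

open Matrix

/-- The space `𝓜` of antisymmetric real `N×N` matrices whose rows sum to zero. -/
def antisymmRowZero (N : ℕ) : Submodule ℝ (Matrix (Fin N) (Fin N) ℝ) where
  carrier := {A | Aᵀ = -A ∧ A.mulVec (fun _ => (1 : ℝ)) = 0}
  add_mem' := by
    rintro A B ⟨hA1, hA2⟩ ⟨hB1, hB2⟩
    exact ⟨by simp [Matrix.transpose_add, hA1, hB1, neg_add, add_comm],
      by simp [Matrix.add_mulVec, hA2, hB2]⟩
  zero_mem' := by
    exact ⟨by simp, by simp⟩
  smul_mem' := by
    rintro c A ⟨hA1, hA2⟩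
    exact ⟨by simp [Matrix.transpose_smul, hA1],
      by simp [Matrix.smul_mulVec, hA2]⟩

namespace Stmt9Aux

lemma mem_antisymmRowZero {N : ℕ} {A : Matrix (Fin N) (Fin N) ℝ} :
    A ∈ antisymmRowZero N ↔ Aᵀ = -A ∧ A.mulVec (fun _ => (1:ℝ)) = 0 := Iff.rfl

lemma transpose_std {N : ℕ} (a b : Fin N) (c : ℝ) :
    (Matrix.single a b c)ᵀ = Matrix.single b a c := by
  ext m n
  simp [Matrix.single, and_comm]

lemma mulVec_std {N : ℕ} (a b : Fin N) :
    (Matrix.single a b (1:ℝ)).mulVec (fun _ => 1) = fun m => if m = a then 1 else 0 := by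
  funext m
  simp only [mulVec, dotProduct, Matrix.single, of_apply, mul_one]
  by_cases h : a = m
  · subst h; simp
  · simp [h, Ne.symm h]

lemma aux_sum {N : ℕ} (a : ℕ) (e f col : Fin N) :
    (∑ t ∈ Finset.univ.filter (fun t : Fin N => (t:ℕ) < a), Matrix.single e f (1:ℝ) t col) =
      if (e:ℕ) < a ∧ f = col then 1 else 0 := by
  by_cases he : (e:ℕ) < a
  · rw [Finset.sum_eq_single_of_mem e (by simp [he])]
    · simp [Matrix.single, he]
    · intro t _ ht
      simp [Matrix.single, Ne.symm ht]
  · rw [Finset.sum_eq_zero, if_neg (by tauto)]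
    intro t ht
    simp only [Finset.mem_filter, Finset.mem_univ, true_and] at ht
    have : e ≠ t := by intro h; subst h; omega
    simp [Matrix.single, this]

lemma decomp_mem {N : ℕ} (a b c : Fin N) :
    (Matrix.single a b (1:ℝ) - Matrix.single b a 1 + Matrix.single b c 1
      - Matrix.single c b 1 + Matrix.single c a 1 - Matrix.single a c 1) ∈
        antisymmRowZero N := by
  constructor
  · simp only [Matrix.transpose_sub, Matrix.transpose_add, transpose_std]
    abel
  · simp only [Matrix.sub_mulVec, Matrix.add_mulVec, mulVec_std]
    funext m
    simp only [Pi.sub_apply, Pi.add_apply, Pi.zero_apply]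
    split_ifs <;> norm_num

set_option maxHeartbeats 1000000 in
lemma M_decomp {N : ℕ} (M : ℕ → ℕ → Matrix (Fin N) (Fin N) ℝ)
    (hM : ∀ i j : ℕ, 1 ≤ i → i ≤ N - 2 → 1 ≤ j → j ≤ N - (i + 1) →
      ∀ m n : Fin N,
        M i j m n =
          if ((m : ℕ) + 1, (n : ℕ) + 1) = (i, i + 1) ∨
             ((m : ℕ) + 1, (n : ℕ) + 1) = (i + 1, i + 1 + j) ∨
             ((m : ℕ) + 1, (n : ℕ) + 1) = (i + 1 + j, i) then 1
          else if ((m : ℕ) + 1, (n : ℕ) + 1) = (i + 1, i) ∨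
                  ((m : ℕ) + 1, (n : ℕ) + 1) = (i + 1 + j, i + 1) ∨
                  ((m : ℕ) + 1, (n : ℕ) + 1) = (i, i + 1 + j) then -1
          else 0)
    (i j : ℕ) (hi1 : 1 ≤ i) (hi2 : i ≤ N - 2) (hj1 : 1 ≤ j) (hj2 : j ≤ N - (i + 1)) :
    M i j =
      Matrix.single ⟨i - 1, by omega⟩ ⟨i, by omega⟩ (1:ℝ)
      - Matrix.single ⟨i, by omega⟩ ⟨i - 1, by omega⟩ 1
      + Matrix.single ⟨i, by omega⟩ ⟨i + j, by omega⟩ 1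
      - Matrix.single ⟨i + j, by omega⟩ ⟨i, by omega⟩ 1
      + Matrix.single ⟨i + j, by omega⟩ ⟨i - 1, by omega⟩ 1
      - Matrix.single ⟨i - 1, by omega⟩ ⟨i + j, by omega⟩ 1 := by
  ext m n
  rw [hM i j hi1 hi2 hj1 hj2]
  simp only [Matrix.sub_apply, Matrix.add_apply, Matrix.single, Matrix.of_apply,
    Prod.mk.injEq, Fin.ext_iff]
  have hm := m.isLt
  have hn := n.isLt
  split_ifs <;> (try norm_num) <;> omega

set_option maxHeartbeats 1000000 in
lemma func_eval {N : ℕ} (M : ℕ → ℕ → Matrix (Fin N) (Fin N) ℝ)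
    (hM : ∀ i j : ℕ, 1 ≤ i → i ≤ N - 2 → 1 ≤ j → j ≤ N - (i + 1) →
      ∀ m n : Fin N,
        M i j m n =
          if ((m : ℕ) + 1, (n : ℕ) + 1) = (i, i + 1) ∨
             ((m : ℕ) + 1, (n : ℕ) + 1) = (i + 1, i + 1 + j) ∨
             ((m : ℕ) + 1, (n : ℕ) + 1) = (i + 1 + j, i) then 1
          else if ((m : ℕ) + 1, (n : ℕ) + 1) = (i + 1, i) ∨
                  ((m : ℕ) + 1, (n : ℕ) + 1) = (i + 1 + j, i + 1) ∨
                  ((m : ℕ) + 1, (n : ℕ) + 1) = (i, i + 1 + j) then -1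
          else 0)
    (i j a b : ℕ) (hi1 : 1 ≤ i) (hi2 : i ≤ N - 2) (hj1 : 1 ≤ j) (hj2 : j ≤ N - (i + 1))
    (ha1 : 1 ≤ a) (ha2 : a ≤ N - 2) (hb1 : 1 ≤ b) (hb2 : b ≤ N - (a + 1))
    (hcol : a + b < N) :
    (∑ t ∈ Finset.univ.filter (fun t : Fin N => (t:ℕ) < a), M i j t ⟨a + b, hcol⟩) =
      if (i, j) = (a, b) then -1 else 0 := by
  rw [M_decomp M hM i j hi1 hi2 hj1 hj2]
  simp only [Matrix.sub_apply, Matrix.add_apply]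
  rw [Finset.sum_sub_distrib, Finset.sum_add_distrib, Finset.sum_sub_distrib,
    Finset.sum_add_distrib, Finset.sum_sub_distrib]
  rw [aux_sum, aux_sum, aux_sum, aux_sum, aux_sum, aux_sum]
  simp only [Fin.ext_iff, Prod.mk.injEq]
  split_ifs <;> (try norm_num) <;> omega

end Stmt9Aux

open Stmt9Aux in
/-- The cycle matrices `M_{i,i+1,i+1+j}`, for `1 ≤ i ≤ N−2` and
`1 ≤ j ≤ N−(i+1)` (with 1-based row/column indices, zero-based index `m` corresponding to
vertex `m+1`), consist of `C(N−1,2)` matrices and form a basis (linearly independent,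
spanning) of the space `𝓜` of antisymmetric real `N×N` matrices with zero row sums. -/
theorem stmt_9 (N : ℕ) (hN : 3 ≤ N)
    (M : ℕ → ℕ → Matrix (Fin N) (Fin N) ℝ)
    (hM : ∀ i j : ℕ, 1 ≤ i → i ≤ N - 2 → 1 ≤ j → j ≤ N - (i + 1) →
      ∀ m n : Fin N,
        M i j m n =
          if ((m : ℕ) + 1, (n : ℕ) + 1) = (i, i + 1) ∨
             ((m : ℕ) + 1, (n : ℕ) + 1) = (i + 1, i + 1 + j) ∨
             ((m : ℕ) + 1, (n : ℕ) + 1) = (i + 1 + j, i) then 1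
          else if ((m : ℕ) + 1, (n : ℕ) + 1) = (i + 1, i) ∨
                  ((m : ℕ) + 1, (n : ℕ) + 1) = (i + 1 + j, i + 1) ∨
                  ((m : ℕ) + 1, (n : ℕ) + 1) = (i, i + 1 + j) then -1
          else 0) :
    LinearIndependent ℝ
      (fun p : {p : ℕ × ℕ // 1 ≤ p.1 ∧ p.1 ≤ N - 2 ∧ 1 ≤ p.2 ∧ p.2 ≤ N - (p.1 + 1)} =>
        M p.1.1 p.1.2) ∧
    Submodule.span ℝ
      (Set.range
        (fun p : {p : ℕ × ℕ // 1 ≤ p.1 ∧ p.1 ≤ N - 2 ∧ 1 ≤ p.2 ∧ p.2 ≤ N - (p.1 + 1)} =>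
          M p.1.1 p.1.2)) = antisymmRowZero N ∧
    Nat.card {p : ℕ × ℕ // 1 ≤ p.1 ∧ p.1 ≤ N - 2 ∧ 1 ≤ p.2 ∧ p.2 ≤ N - (p.1 + 1)} =
      (N - 1).choose 2 := by
  have hNpos : 0 < N := by omega
  classical
  set F : Finset (ℕ × ℕ) := (Finset.range N ×ˢ Finset.range N).filter
      (fun p : ℕ × ℕ => 1 ≤ p.1 ∧ p.1 ≤ N - 2 ∧ 1 ≤ p.2 ∧ p.2 ≤ N - (p.1 + 1)) with hF
  have hmemF : ∀ p : ℕ × ℕ,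
      p ∈ F ↔ 1 ≤ p.1 ∧ p.1 ≤ N - 2 ∧ 1 ≤ p.2 ∧ p.2 ≤ N - (p.1 + 1) := by
    rintro ⟨a, b⟩
    rw [hF]
    simp only [Finset.mem_filter, Finset.mem_product, Finset.mem_range]
    omega
  letI instFT : Fintype {p : ℕ × ℕ // 1 ≤ p.1 ∧ p.1 ≤ N - 2 ∧ 1 ≤ p.2 ∧ p.2 ≤ N - (p.1 + 1)} :=
    Fintype.ofFinset F hmemF
  -- linear independence
  have hli : LinearIndependent ℝ
      (fun p : {p : ℕ × ℕ // 1 ≤ p.1 ∧ p.1 ≤ N - 2 ∧ 1 ≤ p.2 ∧ p.2 ≤ N - (p.1 + 1)} =>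
        M p.1.1 p.1.2) := by
    rw [linearIndependent_iff']
    intro s g hsum q hq
    obtain ⟨hq1, hq2, hq3, hq4⟩ := q.2
    have hcol : q.1.1 + q.1.2 < N := by omega
    set col : Fin N := ⟨q.1.1 + q.1.2, hcol⟩ with hcoldef
    set T := Finset.univ.filter (fun t : Fin N => (t:ℕ) < q.1.1) with hT
    have e1 : ∀ t : Fin N, (∑ p ∈ s, g p • M p.1.1 p.1.2) t col
        = ∑ p ∈ s, g p * M p.1.1 p.1.2 t col := by
      intro t
      rw [Matrix.sum_apply]
      exact Finset.sum_congr rfl (fun p _ => by simp [Matrix.smul_apply])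
    have h1 : ∑ p ∈ s, g p * (∑ t ∈ T, M p.1.1 p.1.2 t col) = 0 := by
      calc ∑ p ∈ s, g p * (∑ t ∈ T, M p.1.1 p.1.2 t col)
          = ∑ p ∈ s, ∑ t ∈ T, g p * M p.1.1 p.1.2 t col := by
            exact Finset.sum_congr rfl (fun p _ => Finset.mul_sum _ _ _)
        _ = ∑ t ∈ T, ∑ p ∈ s, g p * M p.1.1 p.1.2 t col := Finset.sum_comm
        _ = ∑ t ∈ T, (∑ p ∈ s, g p • M p.1.1 p.1.2) t col := by
            exact Finset.sum_congr rfl (fun t _ => (e1 t).symm)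
        _ = 0 := by rw [hsum]; simp
    have h2 : ∀ p ∈ s, g p * (∑ t ∈ T, M p.1.1 p.1.2 t col)
        = g p * (if p = q then (-1:ℝ) else 0) := by
      intro p _
      obtain ⟨hp1, hp2, hp3, hp4⟩ := p.2
      congr 1
      rw [func_eval M hM p.1.1 p.1.2 q.1.1 q.1.2 hp1 hp2 hp3 hp4 hq1 hq2 hq3 hq4 hcol]
      congr 1
      simp only [eq_iff_iff]
      constructor
      · intro h
        apply Subtype.ext
        apply Prod.ext
        · exact (Prod.mk.injEq _ _ _ _ ▸ h).1
        · exact (Prod.mk.injEq _ _ _ _ ▸ h).2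
      · intro h; rw [h]
    rw [Finset.sum_congr rfl h2] at h1
    rw [Finset.sum_eq_single_of_mem q hq (fun p _ hpq => by simp [hpq])] at h1
    simpa using h1
  -- the injection into coordinates
  set Ψ : ↥(antisymmRowZero N) →ₗ[ℝ]
      ({p : ℕ × ℕ // 1 ≤ p.1 ∧ p.1 ≤ N - 2 ∧ 1 ≤ p.2 ∧ p.2 ≤ N - (p.1 + 1)} → ℝ) :=
    { toFun := fun A q => (A : Matrix (Fin N) (Fin N) ℝ)
        ⟨q.1.1, by obtain ⟨h1, h2, h3, h4⟩ := q.2; omega⟩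
        ⟨q.1.1 + q.1.2, by obtain ⟨h1, h2, h3, h4⟩ := q.2; omega⟩
      map_add' := fun A B => rfl
      map_smul' := fun c A => rfl } with hΨ
  have hinj : Function.Injective Ψ := by
    rw [injective_iff_map_eq_zero]
    intro A hA
    obtain ⟨hA1, hA2⟩ := A.2
    have hz : ∀ a b : ℕ, 1 ≤ a → a ≤ N - 2 → 1 ≤ b → b ≤ N - (a + 1) →
        ∀ (h1 : a < N) (h2 : a + b < N), (A : Matrix (Fin N) (Fin N) ℝ) ⟨a, h1⟩ ⟨a + b, h2⟩ = 0 := by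
      intro a b c1 c2 c3 c4 h1 h2
      exact congrFun hA ⟨(a, b), c1, c2, c3, c4⟩
    have diag : ∀ m : Fin N, (A : Matrix (Fin N) (Fin N) ℝ) m m = 0 := by
      intro m
      have h := congrFun (congrFun hA1 m) m
      simp only [Matrix.transpose_apply, Matrix.neg_apply] at h
      linarith
    have upper : ∀ m n : Fin N, 1 ≤ (m:ℕ) → (m:ℕ) < (n:ℕ) →
        (A : Matrix (Fin N) (Fin N) ℝ) m n = 0 := by
      intro m n hm hlt
      have hmN := m.isLt
      have hnN := n.isLt
      have h := hz (↑m) (↑n - ↑m) hm (by omega) (by omega) (by omega) m.isLt (by omega)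
      convert h using 2 <;> simp [Fin.ext_iff] <;> omega
    have step1 : ∀ m n : Fin N, 1 ≤ (m:ℕ) → 1 ≤ (n:ℕ) →
        (A : Matrix (Fin N) (Fin N) ℝ) m n = 0 := by
      intro m n hm hn
      rcases lt_trichotomy (m:ℕ) (n:ℕ) with h | h | h
      · exact upper m n hm h
      · have : m = n := Fin.ext h
        subst this; exact diag m
      · have h1 := congrFun (congrFun hA1 n) m
        simp only [Matrix.transpose_apply, Matrix.neg_apply] at h1
        rw [h1, upper n m hn h, neg_zero]
    have col0 : ∀ m : Fin N, 1 ≤ (m:ℕ) →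
        (A : Matrix (Fin N) (Fin N) ℝ) m ⟨0, hNpos⟩ = 0 := by
      intro m hm
      have h := congrFun hA2 m
      simp only [Matrix.mulVec, dotProduct, mul_one, Pi.zero_apply] at h
      rwa [Finset.sum_eq_single (⟨0, hNpos⟩ : Fin N)
        (fun n _ hn => step1 m n hm (by
          rcases Nat.eq_zero_or_pos (n:ℕ) with h0 | h0
          · exact absurd (Fin.ext h0 : n = ⟨0, hNpos⟩) hn
          · exact h0))
        (by simp)] at h
    have row0 : ∀ n : Fin N, (A : Matrix (Fin N) (Fin N) ℝ) ⟨0, hNpos⟩ n = 0 := by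
      intro n
      rcases Nat.eq_zero_or_pos (n:ℕ) with h0 | h0
      · have : n = ⟨0, hNpos⟩ := Fin.ext h0
        rw [this]; exact diag _
      · have h1 := congrFun (congrFun hA1 n) ⟨0, hNpos⟩
        simp only [Matrix.transpose_apply, Matrix.neg_apply] at h1
        rw [h1, col0 n h0, neg_zero]
    apply Subtype.ext
    show (A : Matrix (Fin N) (Fin N) ℝ) = 0
    ext m n
    simp only [Matrix.zero_apply]
    rcases Nat.eq_zero_or_pos (m:ℕ) with hm | hm
    · have : m = ⟨0, hNpos⟩ := Fin.ext hm
      rw [this]; exact row0 n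
    · rcases Nat.eq_zero_or_pos (n:ℕ) with hn | hn
      · have : n = ⟨0, hNpos⟩ := Fin.ext hn
        rw [this]; exact col0 m hm
      · exact step1 m n hm hn
  -- cardinality
  have hcard : Fintype.card
      {p : ℕ × ℕ // 1 ≤ p.1 ∧ p.1 ≤ N - 2 ∧ 1 ≤ p.2 ∧ p.2 ≤ N - (p.1 + 1)}
      = (N - 1).choose 2 := by
    rw [show Fintype.card
        {p : ℕ × ℕ // 1 ≤ p.1 ∧ p.1 ≤ N - 2 ∧ 1 ≤ p.2 ∧ p.2 ≤ N - (p.1 + 1)} = F.card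
      from Fintype.card_ofFinset F hmemF, hF]
    have hset : ((Finset.range N ×ˢ Finset.range N).filter
        (fun p : ℕ × ℕ => 1 ≤ p.1 ∧ p.1 ≤ N - 2 ∧ 1 ≤ p.2 ∧ p.2 ≤ N - (p.1 + 1)))
        = (Finset.range (N-2)).biUnion
            (fun k => {k+1} ×ˢ Finset.Icc 1 (N-2-k)) := by
      ext ⟨a, b⟩
      simp only [Finset.mem_filter, Finset.mem_product, Finset.mem_range, Finset.mem_biUnion,
        Finset.mem_Icc, Finset.mem_singleton]
      constructor
      · rintro ⟨⟨haN, hbN⟩, h1, h2, h3, h4⟩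
        exact ⟨a - 1, by omega, by omega, h3, by omega⟩
      · rintro ⟨k, hk, rfl, hb1, hb2⟩
        refine ⟨⟨by omega, by omega⟩, by omega, by omega, hb1, by omega⟩
    rw [hset, Finset.card_biUnion]
    · have hpt : ∀ k ∈ Finset.range (N-2), ({k+1} ×ˢ Finset.Icc 1 (N-2-k)).card = N-2-k := by
        intro k _
        rw [Finset.card_product, Finset.card_singleton, Nat.card_Icc, one_mul]
        omega
      rw [Finset.sum_congr rfl hpt]
      -- Gauss sum
      have hrefl : ∑ k ∈ Finset.range (N-2), (N-2-k) = ∑ k ∈ Finset.range (N-2), (k+1) := by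
        have h := Finset.sum_range_reflect (fun j => j + 1) (N-2)
        rw [← h]
        exact Finset.sum_congr rfl (fun k hk => by
          simp only [Finset.mem_range] at hk; omega)
      have hsucc : ∑ k ∈ Finset.range (N-1), k = ∑ k ∈ Finset.range (N-2), (k+1) := by
        have h := Finset.sum_range_succ' (fun k => k) (N-2)
        rw [show N - 1 = N - 2 + 1 by omega, h]
        omega
      have hg := Finset.sum_range_id_mul_two (N-1)
      rw [hrefl, ← hsucc, Nat.choose_two_right]
      omega
    · intro x hx y hy hxy
      simp only [Finset.disjoint_left]
      rintro ⟨a, b⟩ ha hb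
      simp only [Finset.mem_product, Finset.mem_singleton] at ha hb
      exact hxy (by omega : x = y)
  refine ⟨hli, ?_, ?_⟩
  · -- span
    have hle : Submodule.span ℝ
        (Set.range (fun p : {p : ℕ × ℕ // 1 ≤ p.1 ∧ p.1 ≤ N - 2 ∧ 1 ≤ p.2 ∧ p.2 ≤ N - (p.1 + 1)} =>
          M p.1.1 p.1.2)) ≤ antisymmRowZero N := by
      rw [Submodule.span_le]
      rintro _ ⟨p, rfl⟩
      obtain ⟨hp1, hp2, hp3, hp4⟩ := p.2
      show M p.1.1 p.1.2 ∈ (antisymmRowZero N : Set _)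
      rw [SetLike.mem_coe, M_decomp M hM p.1.1 p.1.2 hp1 hp2 hp3 hp4]
      exact decomp_mem _ _ _
    have hfr1 : Module.finrank ℝ
        ↥(Submodule.span ℝ (Set.range
          (fun p : {p : ℕ × ℕ // 1 ≤ p.1 ∧ p.1 ≤ N - 2 ∧ 1 ≤ p.2 ∧ p.2 ≤ N - (p.1 + 1)} =>
            M p.1.1 p.1.2)))
        = Fintype.card {p : ℕ × ℕ // 1 ≤ p.1 ∧ p.1 ≤ N - 2 ∧ 1 ≤ p.2 ∧ p.2 ≤ N - (p.1 + 1)} :=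
      finrank_span_eq_card hli
    have hfr2 : Module.finrank ℝ ↥(antisymmRowZero N)
        ≤ Fintype.card {p : ℕ × ℕ // 1 ≤ p.1 ∧ p.1 ≤ N - 2 ∧ 1 ≤ p.2 ∧ p.2 ≤ N - (p.1 + 1)} := by
      have h := LinearMap.finrank_le_finrank_of_injective hinj
      rwa [Module.finrank_fintype_fun_eq_card ℝ] at h
    exact Submodule.eq_of_le_of_finrank_le hle (by rw [hfr1]; exact hfr2)
  · rw [Nat.card_eq_fintype_card]
    exact hcard
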